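/- arXiv:2501.00976 — 2 statements merged into one kernel-verified Lean document; each statement's English description precedes it below -/
import Mathlib

section
/- For every ε > 0 there exists N₀ such that the following holds for every FA game with n ≥ N₀ agents. Let {P_1, P_2} be a partition of N with |P_1| = ⌈n/2⌉ and |P_2| = ⌊n/2⌋ that is swap-stable, i.e., for every i ∈ P_1 and j ∈ P_2, SW({P_1 \ {i} ∪ {j}, P_2 \ {j} ∪ {i}}) ≤ SW({P_1, P_2}). Let π be the partition of N whose coalitions are the weakly connected components of the friendship graph restricted to P_1 together with the weakly connected components of the friendship graph restricted to P_2. Then for every partition σ of N, SW(σ) ≤ (4 + ε)·SW(π). -/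
open Finset

def faUtil (n : ℕ) (t : Finset (Fin n)) (i : Fin n) (C : Finset (Fin n)) : ℚ :=
  ((C ∩ t).card : ℚ) - ((C \ (t ∪ {i})).card : ℚ) / (n : ℚ)

def faSW (n : ℕ) (F : Fin n → Finset (Fin n))
    (π : Finpartition (univ : Finset (Fin n))) : ℚ :=
  ∑ C ∈ π.parts, ∑ i ∈ C, faUtil n (F i) i C

def faSW2 (n : ℕ) (F : Fin n → Finset (Fin n)) (A B : Finset (Fin n)) : ℚ :=
  (∑ i ∈ A, faUtil n (F i) i A) + ∑ i ∈ B, faUtil n (F i) i B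

def faAdj (n : ℕ) (F : Fin n → Finset (Fin n)) (a b : Fin n) : Prop :=
  a ≠ b ∧ (b ∈ F a ∨ a ∈ F b)

def IsComponent (n : ℕ) (F : Fin n → Finset (Fin n)) (P C : Finset (Fin n)) : Prop :=
  C ⊆ P ∧ C.Nonempty ∧
  (∀ a ∈ C, ∀ b ∈ P, faAdj n F a b → b ∈ C) ∧
  ∀ a ∈ C, ∀ b ∈ C,
    Relation.ReflTransGen (fun u v => u ∈ C ∧ v ∈ C ∧ faAdj n F u v) a b

namespace FAProof

variable {n : ℕ} (F : Fin n → Finset (Fin n))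

/-- number of directed friendship edges inside `C` -/
def eW (C : Finset (Fin n)) : ℕ := ∑ u ∈ C, (C ∩ F u).card

/-- undirected multiplicity of the pair (x,u) -/
def cW (x u : Fin n) : ℕ := (if u ∈ F x then 1 else 0) + (if x ∈ F u then 1 else 0)

/-- total (in+out) degree of `x` into `C` -/
def dW (x : Fin n) (C : Finset (Fin n)) : ℕ := ∑ u ∈ C, cW F x u

lemma cW_symm (x u : Fin n) : cW F x u = cW F u x := by unfold cW; omega

lemma cW_self (hF : ∀ j, j ∉ F j) (x : Fin n) : cW F x x = 0 := by
  unfold cW; simp [hF x]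

lemma inter_card_eq (C t : Finset (Fin n)) :
    (C ∩ t).card = ∑ u ∈ C, (if u ∈ t then 1 else 0) := by
  rw [← Finset.sum_filter, Finset.filter_mem_eq_inter]; simp

lemma dW_eq (x : Fin n) (C : Finset (Fin n)) :
    dW F x C = (C ∩ F x).card + (C.filter (fun u => x ∈ F u)).card := by
  unfold dW cW
  rw [Finset.sum_add_distrib, ← inter_card_eq, ← Finset.sum_filter]
  simp

lemma dW_erase_add {i : Fin n} {A : Finset (Fin n)} (hi : i ∈ A) (x : Fin n) :
    dW F x (A.erase i) + cW F x i = dW F x A :=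
  Finset.sum_erase_add A (cW F x) hi

lemma eW_insert (hF : ∀ j, j ∉ F j) (x : Fin n) (C : Finset (Fin n)) (hx : x ∉ C) :
    eW F (insert x C) = eW F C + dW F x C := by
  unfold eW
  rw [Finset.sum_insert hx]
  have h1 : insert x C ∩ F x = C ∩ F x := Finset.insert_inter_of_notMem (hF x)
  have h2 : ∀ u ∈ C, (insert x C ∩ F u).card
      = (C ∩ F u).card + (if x ∈ F u then 1 else 0) := by
    intro u hu
    by_cases hxu : x ∈ F u
    · rw [Finset.insert_inter_of_mem hxu, Finset.card_insert_of_notMem (by simp [hx]), if_pos hxu]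
    · rw [Finset.insert_inter_of_notMem hxu, if_neg hxu, Nat.add_zero]
  rw [h1, Finset.sum_congr rfl h2, Finset.sum_add_distrib, dW_eq, ← Finset.sum_filter]
  simp
  ring

lemma sum_dW_self (C : Finset (Fin n)) : ∑ i ∈ C, dW F i C = 2 * eW F C := by
  unfold dW cW
  have h1 : ∀ i ∈ C, ∑ u ∈ C, ((if u ∈ F i then 1 else 0) + (if i ∈ F u then 1 else 0))
      = (C ∩ F i).card + ∑ u ∈ C, (if i ∈ F u then 1 else 0) := by
    intro i _
    rw [Finset.sum_add_distrib, ← inter_card_eq]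
  rw [Finset.sum_congr rfl h1, Finset.sum_add_distrib, Finset.sum_comm]
  have h2 : ∀ u ∈ C, ∑ i ∈ C, (if i ∈ F u then 1 else 0) = (C ∩ F u).card := by
    intro u _; rw [← inter_card_eq]
  rw [Finset.sum_congr rfl h2]
  unfold eW; ring

/-- sum of utilities over a coalition, closed form -/
lemma util_sum (hn : 0 < n) (hF : ∀ j, j ∉ F j) (C : Finset (Fin n)) :
    ∑ i ∈ C, faUtil n (F i) i C
      = ((n : ℚ) + 1) / n * (eW F C : ℚ) - ((C.card : ℚ) ^ 2 - C.card) / n := by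
  have hn0 : (n : ℚ) ≠ 0 := by positivity
  have key : ∀ i ∈ C, faUtil n (F i) i C
      = ((C ∩ F i).card : ℚ) * ((n + 1) / n) - ((C.card : ℚ) - 1) / n := by
    intro i hi
    have hsplit : (C ∩ (F i ∪ {i})).card + (C \ (F i ∪ {i})).card = C.card :=
      Finset.card_inter_add_card_sdiff C (F i ∪ {i})
    have hinter : C ∩ (F i ∪ {i}) = (C ∩ F i) ∪ {i} := by
      rw [Finset.inter_union_distrib_left, Finset.inter_singleton_of_mem hi]
    have hdisj : Disjoint (C ∩ F i) ({i} : Finset (Fin n)) := by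
      simp [Finset.disjoint_singleton_right, hF i]
    have hic : (C ∩ (F i ∪ {i})).card = (C ∩ F i).card + 1 := by
      rw [hinter, Finset.card_union_of_disjoint hdisj, Finset.card_singleton]
    have hnum : ((C \ (F i ∪ {i})).card : ℚ) = (C.card : ℚ) - 1 - (C ∩ F i).card := by
      have h' : (C \ (F i ∪ {i})).card + 1 + (C ∩ F i).card = C.card := by omega
      have h'' := congrArg (Nat.cast : ℕ → ℚ) h'
      push_cast at h''; linarith
    unfold faUtil
    rw [hnum]
    field_simp
    ring
  rw [Finset.sum_congr rfl key, Finset.sum_sub_distrib, ← Finset.sum_mul, Finset.sum_const,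
    nsmul_eq_mul]
  unfold eW
  push_cast
  field_simp

/-- connected component has at least card − 1 internal directed edges -/
lemma component_edges {P C : Finset (Fin n)}
    (h : IsComponent n F P C) : C.card ≤ eW F C + 1 := by
  classical
  obtain ⟨hCP, ⟨r, hr⟩, hclosed, hconn⟩ := h
  set G : SimpleGraph (Fin n) :=
    { Adj := fun a b => a ∈ C ∧ b ∈ C ∧ faAdj n F a b
      symm := by
        constructor; rintro a b ⟨ha, hb, hne, hor⟩
        exact ⟨hb, ha, hne.symm, hor.symm⟩
      loopless := by constructor; rintro a ⟨_, _, hne, _⟩; exact hne rfl } with hG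
  have hadj : ∀ {a b}, G.Adj a b ↔ (a ∈ C ∧ b ∈ C ∧ faAdj n F a b) := by
    intro a b; rw [hG]
  have hreach : ∀ a ∈ C, ∀ b ∈ C, G.Reachable a b := by
    intro a ha b hb
    rw [SimpleGraph.reachable_iff_reflTransGen]
    exact hconn a ha b hb
  have step : ∀ x ∈ C.erase r, ∃ y, G.Adj x y ∧ G.dist y r < G.dist x r := by
    intro x hx
    have hxC : x ∈ C := Finset.mem_of_mem_erase hx
    have hxr : x ≠ r := Finset.ne_of_mem_erase hx
    have hre : G.Reachable x r := hreach x hxC r hr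
    obtain ⟨p, hp⟩ := hre.exists_walk_length_eq_dist
    have hpos : 0 < G.dist x r := hre.pos_dist_of_ne hxr
    cases p with
    | nil => omega
    | @cons _ y _ ha q =>
        refine ⟨y, ha, ?_⟩
        have h1 : G.dist y r ≤ q.length := SimpleGraph.dist_le q
        simp only [SimpleGraph.Walk.length_cons] at hp
        omega
  choose! g hg1 hg2 using step
  set D := (C ×ˢ C).filter (fun p : Fin n × Fin n => p.2 ∈ F p.1) with hD
  have hcard : (C.erase r).card ≤ D.card := by
    apply Finset.card_le_card_of_injOn (fun x => if g x ∈ F x then (x, g x) else (g x, x))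
    · intro x hx
      obtain ⟨hxC, hgC, hne, hor⟩ := hadj.1 (hg1 x hx)
      by_cases hcase : g x ∈ F x
      · beta_reduce; rw [if_pos hcase, hD]
        simp only [Finset.mem_coe, Finset.mem_filter, Finset.mem_product]
        exact ⟨⟨hxC, hgC⟩, hcase⟩
      · beta_reduce; rw [if_neg hcase, hD]
        simp only [Finset.mem_coe, Finset.mem_filter, Finset.mem_product]
        exact ⟨⟨hgC, hxC⟩, hor.resolve_left hcase⟩
    · intro x hx y hy hxy
      simp only at hxy
      have hx2 := hg2 x hx
      have hy2 := hg2 y hy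
      split_ifs at hxy with h1 h2 h2 <;> rw [Prod.mk.injEq] at hxy
      · exact hxy.1
      · exfalso
        rw [hxy.2] at hx2
        rw [← hxy.1] at hy2
        omega
      · exfalso
        rw [hxy.1] at hx2
        rw [← hxy.2] at hy2
        omega
      · exact hxy.2
  have hDval : D.card = eW F C := by
    rw [hD, Finset.card_filter, Finset.sum_product]
    exact Finset.sum_congr rfl fun u _ => (inter_card_eq C (F u)).symm
  have he := Finset.card_erase_of_mem hr
  have hcp : 1 ≤ C.card := Finset.card_pos.2 ⟨r, hr⟩
  omega

/-- summing over the parts of a partition equals summing over the ground set -/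
lemma part_sum {M : Type*} [AddCommMonoid M] (π : Finpartition (univ : Finset (Fin n)))
    (f : Fin n → M) : ∑ C ∈ π.parts, ∑ u ∈ C, f u = ∑ u : Fin n, f u := by
  conv_rhs => rw [← π.biUnion_parts]
  rw [Finset.sum_biUnion π.supIndep.pairwiseDisjoint]
  rfl

/-- per-pair consequence of swap stability -/
lemma swap_pair (hn : 0 < n) (hF : ∀ j, j ∉ F j) {A B : Finset (Fin n)} (hd : Disjoint A B)
    {i j : Fin n} (hi : i ∈ A) (hj : j ∈ B)
    (h : faSW2 n F (insert j (A.erase i)) (insert i (B.erase j)) ≤ faSW2 n F A B) :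
    dW F j (A.erase i) + dW F i (B.erase j) ≤ dW F i (A.erase i) + dW F j (B.erase j) := by
  have hjA : j ∉ A := Finset.disjoint_right.1 hd hj
  have hiB : i ∉ B := Finset.disjoint_left.1 hd hi
  have hjA' : j ∉ A.erase i := fun hmem => hjA (Finset.mem_of_mem_erase hmem)
  have hiB' : i ∉ B.erase j := fun hmem => hiB (Finset.mem_of_mem_erase hmem)
  have hiA' : i ∉ A.erase i := Finset.notMem_erase i A
  have hjB' : j ∉ B.erase j := Finset.notMem_erase j B
  have hA1 : 1 ≤ A.card := Finset.card_pos.2 ⟨i, hi⟩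
  have hB1 : 1 ≤ B.card := Finset.card_pos.2 ⟨j, hj⟩
  have hcA : (insert j (A.erase i)).card = A.card := by
    rw [Finset.card_insert_of_notMem hjA', Finset.card_erase_of_mem hi]; omega
  have hcB : (insert i (B.erase j)).card = B.card := by
    rw [Finset.card_insert_of_notMem hiB', Finset.card_erase_of_mem hj]; omega
  have eA' : eW F (insert j (A.erase i)) = eW F (A.erase i) + dW F j (A.erase i) :=
    eW_insert F hF j _ hjA'
  have eB' : eW F (insert i (B.erase j)) = eW F (B.erase j) + dW F i (B.erase j) :=
    eW_insert F hF i _ hiB'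
  have eA : eW F A = eW F (A.erase i) + dW F i (A.erase i) := by
    have h' := eW_insert F hF i (A.erase i) hiA'
    rwa [Finset.insert_erase hi] at h'
  have eB : eW F B = eW F (B.erase j) + dW F j (B.erase j) := by
    have h' := eW_insert F hF j (B.erase j) hjB'
    rwa [Finset.insert_erase hj] at h'
  unfold faSW2 at h
  rw [util_sum F hn hF, util_sum F hn hF, util_sum F hn hF, util_sum F hn hF, hcA, hcB] at h
  have hpos : (0 : ℚ) < ((n : ℚ) + 1) / n := by positivity
  have h' : ((n : ℚ) + 1) / n * (((eW F (insert j (A.erase i)) : ℚ))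
        + (eW F (insert i (B.erase j)) : ℚ))
      ≤ ((n : ℚ) + 1) / n * (((eW F A : ℚ)) + (eW F B : ℚ)) := by
    rw [mul_add, mul_add]; linarith
  have hQ := le_of_mul_le_mul_left h' hpos
  rw [eA', eB'] at hQ
  rw [eA, eB] at hQ
  have hN : eW F (A.erase i) + dW F j (A.erase i) + (eW F (B.erase j) + dW F i (B.erase j))
      ≤ eW F (A.erase i) + dW F i (A.erase i) + (eW F (B.erase j) + dW F j (B.erase j)) := by
    exact_mod_cast hQ
  omega

/-- summed swap inequality (double counting) -/
lemma double_count (hF : ∀ j, j ∉ F j) (A B : Finset (Fin n))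
    (hpair : ∀ i ∈ A, ∀ j ∈ B,
      dW F j (A.erase i) + dW F i (B.erase j) ≤ dW F i (A.erase i) + dW F j (B.erase j)) :
    (A.card + B.card) * (∑ j ∈ B, dW F j A)
      ≤ 2 * B.card * eW F A + 2 * A.card * eW F B + 2 * ∑ j ∈ B, dW F j A := by
  set X := ∑ j ∈ B, dW F j A with hX
  have hsum : ∑ i ∈ A, ∑ j ∈ B, (dW F j (A.erase i) + dW F i (B.erase j))
      ≤ ∑ i ∈ A, ∑ j ∈ B, (dW F i (A.erase i) + dW F j (B.erase j)) :=
    Finset.sum_le_sum fun i hi => Finset.sum_le_sum fun j hj => hpair i hi j hj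
  -- cross sums
  have hcross1 : ∑ i ∈ A, ∑ j ∈ B, cW F j i = X := by
    rw [Finset.sum_comm, hX]
    rfl
  have hcross2 : ∑ i ∈ A, ∑ j ∈ B, cW F i j = X := by
    rw [hX]
    unfold dW
    rw [Finset.sum_comm]
    exact Finset.sum_congr rfl fun i _ => Finset.sum_congr rfl fun j _ => cW_symm F j i
  have hS1 : ∑ i ∈ A, ∑ j ∈ B, dW F j (A.erase i) + X = A.card * X := by
    have e1 : ∀ i ∈ A, ∑ j ∈ B, dW F j (A.erase i) + ∑ j ∈ B, cW F j i = X := by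
      intro i hi
      rw [← Finset.sum_add_distrib]
      exact Finset.sum_congr rfl fun j _ => dW_erase_add F hi j
    calc ∑ i ∈ A, ∑ j ∈ B, dW F j (A.erase i) + X
        = ∑ i ∈ A, (∑ j ∈ B, dW F j (A.erase i) + ∑ j ∈ B, cW F j i) := by
          rw [Finset.sum_add_distrib, hcross1]
      _ = ∑ i ∈ A, X := Finset.sum_congr rfl e1
      _ = A.card * X := by rw [Finset.sum_const, smul_eq_mul]
  have hS2 : ∑ i ∈ A, ∑ j ∈ B, dW F i (B.erase j) + X = B.card * X := by
    have e2 : ∀ i ∈ A, ∑ j ∈ B, dW F i (B.erase j) + ∑ j ∈ B, cW F i j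
        = B.card * dW F i B := by
      intro i _
      have : ∀ j ∈ B, dW F i (B.erase j) + cW F i j = dW F i B :=
        fun j hj => dW_erase_add F hj i
      rw [← Finset.sum_add_distrib, Finset.sum_congr rfl this, Finset.sum_const, smul_eq_mul]
    have e3 : ∑ i ∈ A, dW F i B = X := by
      rw [hX]
      unfold dW
      rw [Finset.sum_comm]
      exact Finset.sum_congr rfl fun j _ => Finset.sum_congr rfl fun i _ => cW_symm F i j
    calc ∑ i ∈ A, ∑ j ∈ B, dW F i (B.erase j) + X
        = ∑ i ∈ A, (∑ j ∈ B, dW F i (B.erase j) + ∑ j ∈ B, cW F i j) := by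
          rw [Finset.sum_add_distrib, hcross2]
      _ = ∑ i ∈ A, B.card * dW F i B := Finset.sum_congr rfl e2
      _ = B.card * ∑ i ∈ A, dW F i B := by rw [Finset.mul_sum]
      _ = B.card * X := by rw [e3]
  have hS3 : ∑ i ∈ A, ∑ j ∈ B, dW F i (A.erase i) = B.card * (2 * eW F A) := by
    have e4 : ∀ i ∈ A, dW F i (A.erase i) = dW F i A := by
      intro i hi
      have := dW_erase_add F hi i
      rw [cW_self F hF] at this
      omega
    calc ∑ i ∈ A, ∑ j ∈ B, dW F i (A.erase i)
        = ∑ i ∈ A, B.card * dW F i (A.erase i) := by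
          exact Finset.sum_congr rfl fun i _ => by rw [Finset.sum_const, smul_eq_mul]
      _ = B.card * ∑ i ∈ A, dW F i A := by
          rw [Finset.mul_sum]
          exact Finset.sum_congr rfl fun i hi => by rw [e4 i hi]
      _ = B.card * (2 * eW F A) := by rw [sum_dW_self]
  have hS4 : ∑ i ∈ A, ∑ j ∈ B, dW F j (B.erase j) = A.card * (2 * eW F B) := by
    have e5 : ∀ j ∈ B, dW F j (B.erase j) = dW F j B := by
      intro j hj
      have := dW_erase_add F hj j
      rw [cW_self F hF] at this
      omega
    calc ∑ i ∈ A, ∑ j ∈ B, dW F j (B.erase j)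
        = ∑ i ∈ A, (2 * eW F B) := by
          refine Finset.sum_congr rfl fun i _ => ?_
          rw [Finset.sum_congr rfl e5, sum_dW_self]
      _ = A.card * (2 * eW F B) := by rw [Finset.sum_const, smul_eq_mul]
  have hsplit1 : ∑ i ∈ A, ∑ j ∈ B, (dW F j (A.erase i) + dW F i (B.erase j))
      = ∑ i ∈ A, ∑ j ∈ B, dW F j (A.erase i) + ∑ i ∈ A, ∑ j ∈ B, dW F i (B.erase j) := by
    rw [← Finset.sum_add_distrib]
    exact Finset.sum_congr rfl fun i _ => Finset.sum_add_distrib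
  have hsplit2 : ∑ i ∈ A, ∑ j ∈ B, (dW F i (A.erase i) + dW F j (B.erase j))
      = ∑ i ∈ A, ∑ j ∈ B, dW F i (A.erase i) + ∑ i ∈ A, ∑ j ∈ B, dW F j (B.erase j) := by
    rw [← Finset.sum_add_distrib]
    exact Finset.sum_congr rfl fun i _ => Finset.sum_add_distrib
  rw [hsplit1, hsplit2, hS3, hS4] at hsum
  have := hS1
  have := hS2
  nlinarith [hsum, hS1, hS2]

/-- total number of edges split by the cut -/
lemma m_eq (A B : Finset (Fin n)) (hd : Disjoint A B) (hu : A ∪ B = univ) :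
    ∑ u : Fin n, (F u).card = eW F A + eW F B + ∑ j ∈ B, dW F j A := by
  have hsplit : ∀ u : Fin n, (F u).card = (A ∩ F u).card + (B ∩ F u).card := by
    intro u
    have hdisj : Disjoint (A ∩ F u) (B ∩ F u) :=
      hd.mono Finset.inter_subset_left Finset.inter_subset_left
    rw [← Finset.card_union_of_disjoint hdisj, ← Finset.union_inter_distrib_right, hu,
      Finset.univ_inter]
  have hX : ∑ j ∈ B, dW F j A
      = ∑ j ∈ B, (A ∩ F j).card + ∑ u ∈ A, (B ∩ F u).card := by
    have h1 : ∀ j ∈ B, dW F j A = (A ∩ F j).card + ∑ u ∈ A, (if j ∈ F u then 1 else 0) := by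
      intro j _
      rw [dW_eq, Finset.card_filter]
    rw [Finset.sum_congr rfl h1, Finset.sum_add_distrib, Finset.sum_comm]
    congr 1
    exact Finset.sum_congr rfl fun u _ => (inter_card_eq B (F u)).symm
  calc ∑ u : Fin n, (F u).card
      = ∑ u ∈ A ∪ B, (F u).card := by rw [hu]
    _ = ∑ u ∈ A, (F u).card + ∑ u ∈ B, (F u).card := Finset.sum_union hd
    _ = (∑ u ∈ A, (A ∩ F u).card + ∑ u ∈ A, (B ∩ F u).card)
        + (∑ u ∈ B, (A ∩ F u).card + ∑ u ∈ B, (B ∩ F u).card) := by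
        rw [← Finset.sum_add_distrib, ← Finset.sum_add_distrib]
        rw [Finset.sum_congr rfl fun u _ => hsplit u, Finset.sum_congr rfl fun u _ => hsplit u]
    _ = eW F A + eW F B + ∑ j ∈ B, dW F j A := by
        rw [hX]
        unfold eW
        ring

/-- the internal edges of the two halves are covered by the component partition -/
lemma parts_cover (hF : ∀ j, j ∉ F j) (A B : Finset (Fin n)) (hd : Disjoint A B)
    (hu : A ∪ B = univ) (π : Finpartition (univ : Finset (Fin n)))
    (hparts : ∀ C ∈ π.parts, IsComponent n F A C ∨ IsComponent n F B C) :
    eW F A + eW F B ≤ ∑ C ∈ π.parts, eW F C := by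
  classical
  set g : Fin n → ℕ := fun u => if u ∈ A then (A ∩ F u).card else (B ∩ F u).card with hg
  have h1 : eW F A + eW F B = ∑ u : Fin n, g u := by
    rw [← hu, Finset.sum_union hd]
    unfold eW
    congr 1
    · exact Finset.sum_congr rfl fun u hu' => by rw [hg]; simp [hu']
    · refine Finset.sum_congr rfl fun u hu' => ?_
      have : u ∉ A := Finset.disjoint_right.1 hd hu'
      rw [hg]; simp [this]
  rw [h1, ← part_sum π g]
  refine Finset.sum_le_sum fun C hC => ?_
  refine Finset.sum_le_sum fun u huC => ?_
  rcases hparts C hC with hcomp | hcomp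
  · obtain ⟨hCA, _, hclosed, _⟩ := hcomp
    have huA : u ∈ A := hCA huC
    rw [hg]
    simp only [if_pos huA]
    refine Finset.card_le_card fun v hv => ?_
    rw [Finset.mem_inter] at hv ⊢
    refine ⟨hclosed u huC v hv.1 ⟨?_, Or.inl hv.2⟩, hv.2⟩
    intro huv
    exact hF u (huv ▸ hv.2)
  · obtain ⟨hCB, _, hclosed, _⟩ := hcomp
    have huB : u ∈ B := hCB huC
    have huA : u ∉ A := Finset.disjoint_right.1 hd huB
    rw [hg]
    simp only [if_neg huA]
    refine Finset.card_le_card fun v hv => ?_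
    rw [Finset.mem_inter] at hv ⊢
    refine ⟨hclosed u huC v hv.1 ⟨?_, Or.inl hv.2⟩, hv.2⟩
    intro huv
    exact hF u (huv ▸ hv.2)

/-- upper bound on any partition's social welfare -/
lemma sw_le (σ : Finpartition (univ : Finset (Fin n))) :
    faSW n F σ ≤ ((∑ u : Fin n, (F u).card : ℕ) : ℚ) := by
  unfold faSW
  calc ∑ C ∈ σ.parts, ∑ i ∈ C, faUtil n (F i) i C
      ≤ ∑ C ∈ σ.parts, ∑ i ∈ C, ((F i).card : ℚ) := by
        refine Finset.sum_le_sum fun C _ => Finset.sum_le_sum fun i _ => ?_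
        unfold faUtil
        have h1 : ((C ∩ F i).card : ℚ) ≤ (F i).card := by
          exact_mod_cast Finset.card_le_card (Finset.inter_subset_right)
        have h2 : (0 : ℚ) ≤ ((C \ (F i ∪ {i})).card : ℚ) / n := by positivity
        linarith
    _ = ((∑ u : Fin n, (F u).card : ℕ) : ℚ) := by
        rw [part_sum σ (fun u => ((F u).card : ℚ))]
        push_cast
        rfl

end FAProof

/-- For every `ε > 0` there is `N₀` such that for all FA games with `n ≥ N₀` agents:
if `{P₁, P₂}` is a swap-stable partition with `|P₁| = ⌈n/2⌉`, `|P₂| = ⌊n/2⌋`, and `π`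
is the partition into weakly connected components of the friendship graph restricted
to `P₁` and to `P₂`, then `SW(σ) ≤ (4 + ε)·SW(π)` for every partition `σ`. -/
theorem stmt15 :
    ∀ ε : ℚ, 0 < ε → ∃ N₀ : ℕ, ∀ n : ℕ, N₀ ≤ n →
      ∀ F : Fin n → Finset (Fin n), (∀ j, j ∉ F j) →
        ∀ P₁ P₂ : Finset (Fin n), Disjoint P₁ P₂ → P₁ ∪ P₂ = univ →
          P₁.card = (n + 1) / 2 → P₂.card = n / 2 →
          (∀ i ∈ P₁, ∀ j ∈ P₂,
            faSW2 n F (insert j (P₁.erase i)) (insert i (P₂.erase j)) ≤ faSW2 n F P₁ P₂) →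
          ∀ π : Finpartition (univ : Finset (Fin n)),
            (∀ C ∈ π.parts, IsComponent n F P₁ C ∨ IsComponent n F P₂ C) →
            ∀ σ : Finpartition (univ : Finset (Fin n)),
              faSW n F σ ≤ (4 + ε) * faSW n F π := by
  classical
  intro ε hε
  refine ⟨10 + ⌈6 / ε⌉₊, ?_⟩
  intro n hn F hF P₁ P₂ hd hu h1 h2 hswap π hπ σ
  open FAProof in
  have hn10 : 10 ≤ n := by omega
  have hn0 : 0 < n := by omega
  have hnQ : (10 : ℚ) ≤ n := by exact_mod_cast hn10
  have hεn : 6 ≤ ε * n := by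
    have hceil : (6 / ε : ℚ) ≤ ⌈6 / ε⌉₊ := Nat.le_ceil _
    have h' : (⌈6 / ε⌉₊ : ℚ) ≤ n := by exact_mod_cast (by omega : ⌈6 / ε⌉₊ ≤ n)
    have : 6 / ε ≤ n := le_trans hceil h'
    calc (6 : ℚ) = 6 / ε * ε := by field_simp
      _ ≤ n * ε := by apply mul_le_mul_of_nonneg_right this hε.le
      _ = ε * n := mul_comm _ _
  -- cast of basic cardinalities
  have hcards : P₁.card + P₂.card = n := by
    have := Finset.card_union_of_disjoint hd
    rw [hu, Finset.card_univ, Fintype.card_fin] at this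
    omega
  -- Nat-level swap stability
  have hpair : ∀ i ∈ P₁, ∀ j ∈ P₂,
      FAProof.dW F j (P₁.erase i) + FAProof.dW F i (P₂.erase j)
        ≤ FAProof.dW F i (P₁.erase i) + FAProof.dW F j (P₂.erase j) :=
    fun i hi j hj => FAProof.swap_pair F hn0 hF hd hi hj (hswap i hi j hj)
  -- notation
  obtain ⟨m, hm⟩ : ∃ m, m = ∑ u : Fin n, (F u).card := ⟨_, rfl⟩
  obtain ⟨X, hXdef⟩ : ∃ X, X = ∑ j ∈ P₂, FAProof.dW F j P₁ := ⟨_, rfl⟩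
  obtain ⟨s, hsdef⟩ : ∃ s, s = FAProof.eW F P₁ + FAProof.eW F P₂ := ⟨_, rfl⟩
  obtain ⟨E, hEdef⟩ : ∃ E, E = ∑ C ∈ π.parts, FAProof.eW F C := ⟨_, rfl⟩
  have f1 : (P₁.card + P₂.card) * X
      ≤ 2 * P₂.card * FAProof.eW F P₁ + 2 * P₁.card * FAProof.eW F P₂ + 2 * X := by
    rw [hXdef]; exact FAProof.double_count F hF P₁ P₂ hpair
  have f2 : m = s + X := by
    rw [hm, hsdef, hXdef]; exact FAProof.m_eq F P₁ P₂ hd hu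
  have f3 : s ≤ E := by
    rw [hsdef, hEdef]; exact FAProof.parts_cover F hF P₁ P₂ hd hu π hπ
  -- n * X ≤ (n+1) * s + 2 * X
  have f1' : n * X ≤ (n + 1) * s + 2 * X := by
    have hb1 : 2 * P₂.card * FAProof.eW F P₁ ≤ (n + 1) * FAProof.eW F P₁ :=
      Nat.mul_le_mul_right _ (by omega)
    have hb2 : 2 * P₁.card * FAProof.eW F P₂ ≤ (n + 1) * FAProof.eW F P₂ :=
      Nat.mul_le_mul_right _ (by omega)
    calc n * X = (P₁.card + P₂.card) * X := by rw [hcards]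
      _ ≤ 2 * P₂.card * FAProof.eW F P₁ + 2 * P₁.card * FAProof.eW F P₂ + 2 * X := f1
      _ ≤ (n + 1) * FAProof.eW F P₁ + (n + 1) * FAProof.eW F P₂ + 2 * X := by omega
      _ = (n + 1) * s + 2 * X := by rw [hsdef]; ring
  -- rational versions
  have qf1 : (n : ℚ) * X ≤ ((n : ℚ) + 1) * s + 2 * X := by exact_mod_cast f1'
  have qf2 : (m : ℚ) = s + X := by exact_mod_cast f2
  have qf3 : (s : ℚ) ≤ E := by exact_mod_cast f3
  -- lower bound for faSW π
  have hlow : ((n : ℚ) + 1) / (2 * n) * E ≤ faSW n F π := by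
    unfold faSW
    rw [hEdef]
    push_cast
    rw [Finset.mul_sum]
    refine Finset.sum_le_sum fun C hC => ?_
    rw [FAProof.util_sum F hn0 hF C]
    -- facts about the part C
    have hedge : C.card ≤ FAProof.eW F C + 1 := by
      rcases hπ C hC with h | h
      · exact FAProof.component_edges F h
      · exact FAProof.component_edges F h
    have hbig : 2 * C.card ≤ n + 1 := by
      rcases hπ C hC with h | h
      · have := Finset.card_le_card h.1; omega
      · have := Finset.card_le_card h.1; omega
    have hne : 1 ≤ C.card := by
      rcases hπ C hC with h | h
      · exact Finset.card_pos.2 h.2.1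
      · exact Finset.card_pos.2 h.2.1
    have hc1 : ((C.card : ℚ)) ≤ (FAProof.eW F C : ℚ) + 1 := by exact_mod_cast hedge
    have hc2 : 2 * ((C.card : ℚ)) ≤ (n : ℚ) + 1 := by exact_mod_cast hbig
    have hc3 : (1 : ℚ) ≤ C.card := by exact_mod_cast hne
    have hE0 : (0 : ℚ) ≤ (FAProof.eW F C : ℚ) := by positivity
    have hnpos : (0 : ℚ) < n := by exact_mod_cast hn0
    have key : ((C.card : ℚ)) ^ 2 - C.card ≤ ((n : ℚ) + 1) / 2 * (FAProof.eW F C : ℚ) := by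
      have k2 : ((C.card : ℚ)) * (((C.card : ℚ)) - 1) ≤ ((C.card : ℚ)) * (FAProof.eW F C : ℚ) :=
        mul_le_mul_of_nonneg_left (by linarith) (by linarith)
      have k1 : ((C.card : ℚ)) * (FAProof.eW F C : ℚ)
          ≤ ((n : ℚ) + 1) / 2 * (FAProof.eW F C : ℚ) :=
        mul_le_mul_of_nonneg_right (by linarith) hE0
      nlinarith [k1, k2]
    have hiden : ((n : ℚ) + 1) / n * (FAProof.eW F C : ℚ)
        - (((C.card : ℚ)) ^ 2 - C.card) / n - ((n : ℚ) + 1) / (2 * n) * (FAProof.eW F C : ℚ)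
        = (((n : ℚ) + 1) / 2 * (FAProof.eW F C : ℚ) - (((C.card : ℚ)) ^ 2 - C.card)) / n := by
      field_simp
      ring
    have hnonneg := div_nonneg (sub_nonneg.2 key) hnpos.le
    linarith [hiden, hnonneg]
  -- upper bound for faSW σ
  have hup : faSW n F σ ≤ (m : ℚ) := by rw [hm]; exact_mod_cast FAProof.sw_le F σ
  -- final numeric assembly
  clear hswap hπ hpair f1 f2 f3 f1' hm hXdef hsdef hEdef hd hu h1 h2 hcards hF hn hn10
  have qms : ((n : ℚ) - 2) * m ≤ (2 * n - 1) * s := by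
    rw [qf2]; ring_nf; ring_nf at qf1; linarith [qf1]
  have hnpos : (0 : ℚ) < n := by exact_mod_cast hn0
  have hm0 : (0 : ℚ) ≤ m := Nat.cast_nonneg m
  have hs0 : (0 : ℚ) ≤ s := Nat.cast_nonneg s
  have hE0 : (0 : ℚ) ≤ E := le_trans hs0 qf3
  have hpoly : 2 * (n : ℚ) * (2 * n - 1) ≤ (4 + ε) * ((n : ℚ) + 1) * ((n : ℚ) - 2) := by
    have e1 : (0:ℚ) ≤ (ε * n - 6) * ((n:ℚ) - 2) :=
      mul_nonneg (by linarith) (by linarith)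
    have e2 : (0:ℚ) ≤ ε * ((n:ℚ) - 2) := mul_nonneg hε.le (by linarith)
    nlinarith [e1, e2, hnQ]
  -- 2n * m ≤ (4+ε) * (n+1) * E
  have hmain : 2 * (n : ℚ) * m ≤ (4 + ε) * ((n : ℚ) + 1) * E := by
    have c1 : 2 * (n : ℚ) * (2 * n - 1) * m ≤ (4 + ε) * ((n : ℚ) + 1) * ((n : ℚ) - 2) * m :=
      mul_le_mul_of_nonneg_right hpoly hm0
    have hco : (0:ℚ) ≤ (4 + ε) * ((n : ℚ) + 1) :=
      mul_nonneg (by linarith) (by linarith)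
    have c2 : (4 + ε) * ((n : ℚ) + 1) * (((n : ℚ) - 2) * m)
        ≤ (4 + ε) * ((n : ℚ) + 1) * ((2 * n - 1) * s) :=
      mul_le_mul_of_nonneg_left qms hco
    have h2n1 : (0 : ℚ) ≤ 2 * (n : ℚ) - 1 := by linarith
    have c3 : (4 + ε) * ((n : ℚ) + 1) * ((2 * n - 1) * s)
        ≤ (4 + ε) * ((n : ℚ) + 1) * ((2 * n - 1) * E) :=
      mul_le_mul_of_nonneg_left
        (mul_le_mul_of_nonneg_left qf3 h2n1) hco
    have hfac : (0 : ℚ) < 2 * n - 1 := by linarith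
    have : (2 * (n : ℚ) - 1) * (2 * (n : ℚ) * m)
        ≤ (2 * (n : ℚ) - 1) * ((4 + ε) * ((n : ℚ) + 1) * E) := by
      ring_nf
      ring_nf at c1 c2 c3
      linarith [c1, c2, c3]
    exact le_of_mul_le_mul_left this hfac
  -- conclude
  have hfinal : (m : ℚ) ≤ (4 + ε) * faSW n F π := by
    have step1 : (4 + ε) * (((n : ℚ) + 1) / (2 * n) * E) ≤ (4 + ε) * faSW n F π :=
      mul_le_mul_of_nonneg_left hlow (by linarith)
    have step2 : (m : ℚ) ≤ (4 + ε) * (((n : ℚ) + 1) / (2 * n) * E) := by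
      rw [div_mul_eq_mul_div, mul_div_assoc']
      rw [le_div_iff₀ (by linarith : (0:ℚ) < 2 * n)]
      calc (m : ℚ) * (2 * n) = 2 * n * m := by ring
        _ ≤ (4 + ε) * ((n : ℚ) + 1) * E := hmain
        _ = (4 + ε) * (((n : ℚ) + 1) * E) := by ring
    linarith
  linarith
end

section
/- For Enemies Aversion (EA) preferences with n ≥ 4 agents, no mechanism M that outputs, for every declaration profile d, a partition maximizing the EA social welfare of the game induced by d is non-obviously manipulable; specifically, there exist an agent i, a true type t_i, and a false declaration d_i such that min_{π ∈ Π_i(d_i,M)} u_i(π) > min_{π ∈ Π_i(t_i,M)} u_i(π) (Condition 2 of NOM is violated). -/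
open Finset

/-- EA utility of agent `i` with friend set `t` for a coalition `C` containing her:
`u_i(C) = |C ∩ F_i| / n − |C ∩ E_i|`, where `E_i = N \ (F_i ∪ {i})`. -/
def eaUtil (n : ℕ) (t : Finset (Fin n)) (i : Fin n) (C : Finset (Fin n)) : ℚ :=
  ((C ∩ t).card : ℚ) / (n : ℚ) - ((C \ (t ∪ {i})).card : ℚ)

/-- EA social welfare of a partition, where agent `j` declares the friend set `F j`. -/
def eaSW (n : ℕ) (F : Fin n → Finset (Fin n))
    (π : Finpartition (univ : Finset (Fin n))) : ℚ :=
  ∑ C ∈ π.parts, ∑ i ∈ C, eaUtil n (F i) i C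

/-- EA utility of agent `i` (with true friend set `t`) for the coalition of `i` in `π`:
since `i` lies in exactly one part, this sum equals `u_i(π(i))`. -/
def eaAgentUtil (n : ℕ) (t : Finset (Fin n)) (i : Fin n)
    (π : Finpartition (univ : Finset (Fin n))) : ℚ :=
  ∑ C ∈ π.parts.filter (fun C => i ∈ C), eaUtil n t i C

/-! ### Auxiliary lemmas -/

lemma eaAgentUtil_eq {n : ℕ} (t : Finset (Fin n)) (i : Fin n)
    (π : Finpartition (univ : Finset (Fin n))) (C : Finset (Fin n)) (hC : C ∈ π.parts)
    (hiC : i ∈ C) : eaAgentUtil n t i π = eaUtil n t i C := by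
  have : π.parts.filter (fun D => i ∈ D) = {C} := by
    ext D
    simp only [mem_filter, mem_singleton]
    constructor
    · rintro ⟨hD, hiD⟩
      exact π.eq_of_mem_parts hD hC hiD hiC
    · rintro rfl; exact ⟨hC, hiC⟩
  rw [eaAgentUtil, this, sum_singleton]

lemma eaUtil_le {n : ℕ} (hn : 0 < n) {F : Finset (Fin n)} {j : Fin n} {C : Finset (Fin n)}
    (hj : j ∈ C) (hjF : j ∉ F) : eaUtil n F j C ≤ ((C.card : ℚ) - 1) / n := by
  have hsub : C ∩ F ⊆ C.erase j := by
    intro x hx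
    rcases mem_inter.1 hx with ⟨h1, h2⟩
    exact mem_erase.2 ⟨fun h => hjF (h ▸ h2), h1⟩
  have hc : 1 ≤ C.card := card_pos.2 ⟨j, hj⟩
  have h1 : ((C ∩ F).card : ℚ) ≤ (C.card : ℚ) - 1 := by
    have h := card_le_card hsub
    rw [card_erase_of_mem hj] at h
    have := (Nat.cast_le (α := ℚ)).2 h
    rwa [Nat.cast_sub hc, Nat.cast_one] at this
  have h2 : (0 : ℚ) ≤ ((C \ (F ∪ {j})).card : ℚ) := Nat.cast_nonneg _
  have hn' : (0 : ℚ) < n := by exact_mod_cast hn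
  calc eaUtil n F j C ≤ ((C ∩ F).card : ℚ) / n := by unfold eaUtil; linarith
  _ ≤ ((C.card : ℚ) - 1) / n := by gcongr

lemma partWelfare_le {n : ℕ} (hn : 0 < n) (d : Fin n → Finset (Fin n)) (hd : ∀ j, j ∉ d j)
    (C : Finset (Fin n)) :
    ∑ j ∈ C, eaUtil n (d j) j C ≤ ((C.card : ℚ) ^ 2 - C.card) / n := by
  calc ∑ j ∈ C, eaUtil n (d j) j C ≤ ∑ _j ∈ C, ((C.card : ℚ) - 1) / n :=
    sum_le_sum fun j hj => eaUtil_le hn hj (hd j)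
  _ = C.card * (((C.card : ℚ) - 1) / n) := by rw [sum_const, nsmul_eq_mul]
  _ = ((C.card : ℚ) ^ 2 - C.card) / n := by ring

/-- If two distinct parts exist, the welfare is at most `(n² − 3n + 2)/n`. -/
lemma sw_separated {n : ℕ} (hn : 4 ≤ n) (d : Fin n → Finset (Fin n)) (hd : ∀ j, j ∉ d j)
    (π : Finpartition (univ : Finset (Fin n))) {A B : Finset (Fin n)}
    (hA : A ∈ π.parts) (hB : B ∈ π.parts) (hAB : A ≠ B) :
    eaSW n d π ≤ ((n : ℚ)^2 - 3*n + 2) / n := by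
  have hn0 : 0 < n := by omega
  have hnq : (0 : ℚ) < n := by exact_mod_cast hn0
  classical
  set a : ℕ := A.card with ha_def
  set b : ℕ := ∑ D ∈ π.parts.erase A, D.card with hb_def
  have hab : b + a = n := by
    have h := Finset.sum_erase_add π.parts (fun D => D.card) hA
    rw [π.sum_card_parts, card_univ, Fintype.card_fin] at h
    exact h
  have hS : ∑ D ∈ π.parts, D.card ^ 2 ≤ a ^ 2 + b ^ 2 := by
    have h := Finset.sum_erase_add π.parts (fun D => D.card ^ 2) hA
    have h2 : ∑ D ∈ π.parts.erase A, D.card ^ 2 ≤ b ^ 2 :=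
      sum_sq_le_sq_sum_of_nonneg (fun i _ => Nat.zero_le _)
    rw [← ha_def] at h
    omega
  have ha1 : 1 ≤ a := card_pos.2 (π.nonempty_of_mem_parts hA)
  have hb1 : 1 ≤ b := by
    have hBmem : B ∈ π.parts.erase A := mem_erase.2 ⟨fun h => hAB h.symm, hB⟩
    calc 1 ≤ B.card := card_pos.2 (π.nonempty_of_mem_parts hB)
    _ ≤ b := single_le_sum (f := fun D => D.card) (fun _ _ => Nat.zero_le _) hBmem
  have h1 : eaSW n d π ≤ ((∑ D ∈ π.parts, D.card ^ 2 : ℕ) - (n : ℚ)) / n := by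
    calc eaSW n d π ≤ ∑ D ∈ π.parts, (((D.card : ℚ))^2 - D.card) / n :=
      sum_le_sum fun D _ => partWelfare_le hn0 d hd D
    _ = ((∑ D ∈ π.parts, ((D.card : ℚ))^2) - ∑ D ∈ π.parts, ((D.card : ℚ))) / n := by
      rw [← sum_div, ← sum_sub_distrib]
    _ = ((∑ D ∈ π.parts, D.card ^ 2 : ℕ) - (∑ D ∈ π.parts, D.card : ℕ)) / n := by
      push_cast; ring
    _ = _ := by rw [π.sum_card_parts, card_univ, Fintype.card_fin]
  have hSq : ((∑ D ∈ π.parts, D.card ^ 2 : ℕ) : ℚ) ≤ (a : ℚ)^2 + (b : ℚ)^2 := by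
    exact_mod_cast (Nat.cast_le (α := ℚ)).2 hS
  have habq : (b : ℚ) + a = n := by exact_mod_cast hab
  have ha1q : (1 : ℚ) ≤ a := by exact_mod_cast ha1
  have hb1q : (1 : ℚ) ≤ b := by exact_mod_cast hb1
  have hnum : ((∑ D ∈ π.parts, D.card ^ 2 : ℕ) : ℚ) - (n:ℚ) ≤ (n : ℚ)^2 - 3*n + 2 := by
    nlinarith [mul_nonneg (sub_nonneg.2 ha1q) (sub_nonneg.2 hb1q)]
  calc eaSW n d π ≤ ((∑ D ∈ π.parts, D.card ^ 2 : ℕ) - (n : ℚ)) / n := h1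
  _ ≤ ((n : ℚ)^2 - 3*n + 2) / n := by gcongr

/-- Removing an agent from a coalition decreases anyone else's utility by at most 1/n. -/
lemma eaUtil_erase_ge {n : ℕ} (hn : 0 < n) (F : Finset (Fin n)) {j i : Fin n}
    (C : Finset (Fin n)) :
    eaUtil n F j C - 1 / n ≤ eaUtil n F j (C.erase i) := by
  have hnq : (0 : ℚ) < n := by exact_mod_cast hn
  have h1 : (C ∩ F).card ≤ ((C.erase i) ∩ F).card + 1 := by
    have hsub : C ∩ F ⊆ insert i ((C.erase i) ∩ F) := by
      intro x hx
      rcases mem_inter.1 hx with ⟨h1, h2⟩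
      by_cases hxi : x = i
      · exact mem_insert.2 (Or.inl hxi)
      · exact mem_insert.2 (Or.inr (mem_inter.2 ⟨mem_erase.2 ⟨hxi, h1⟩, h2⟩))
    calc (C ∩ F).card ≤ (insert i ((C.erase i) ∩ F)).card := card_le_card hsub
    _ ≤ ((C.erase i) ∩ F).card + 1 := card_insert_le _ _
  have h2 : ((C.erase i) \ (F ∪ {j})).card ≤ (C \ (F ∪ {j})).card :=
    card_le_card (sdiff_subset_sdiff (erase_subset _ _) (Subset.refl _))
  have h1q : ((C ∩ F).card : ℚ) - 1 ≤ (((C.erase i) ∩ F).card : ℚ) := by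
    have := (Nat.cast_le (α := ℚ)).2 h1
    push_cast at this
    linarith
  have h2q : (((C.erase i) \ (F ∪ {j})).card : ℚ) ≤ ((C \ (F ∪ {j})).card : ℚ) :=
    (Nat.cast_le (α := ℚ)).2 h2
  have h3 : (((C ∩ F).card : ℚ) - 1) / n ≤ (((C.erase i) ∩ F).card : ℚ) / n := by
    gcongr
  unfold eaUtil
  rw [sub_div] at h3
  linarith

/-- If agent `i` declares no friends, in any optimal partition her part is `{i}`. -/
lemma part_singleton {n : ℕ} (hn : 4 ≤ n) (d : Fin n → Finset (Fin n)) (hd : ∀ j, j ∉ d j)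
    (i : Fin n) (hdi : d i = ∅) (π : Finpartition (univ : Finset (Fin n)))
    (hopt : ∀ σ : Finpartition (univ : Finset (Fin n)), eaSW n d σ ≤ eaSW n d π)
    (C : Finset (Fin n)) (hC : C ∈ π.parts) (hiC : i ∈ C) : C = {i} := by
  classical
  have hn0 : 0 < n := by omega
  have hnq : (0 : ℚ) < n := by exact_mod_cast hn0
  by_contra hne
  obtain ⟨k, hkC, hki⟩ : ∃ k ∈ C, k ≠ i := by
    by_contra h
    push_neg at h
    exact hne (Finset.eq_singleton_iff_unique_mem.2 ⟨hiC, h⟩)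
  set C' : Finset (Fin n) := C.erase i with hC'_def
  have hkC' : k ∈ C' := mem_erase.2 ⟨hki, hkC⟩
  have hiC' : i ∉ C' := notMem_erase _ _
  have hC'ne : C' ≠ ∅ := fun h => by rw [h] at hkC'; exact notMem_empty k hkC'
  have hsing_notin : ({i} : Finset (Fin n)) ∉ π.parts.erase C := by
    intro h
    have heq := π.eq_of_mem_parts (mem_of_mem_erase h) hC (mem_singleton_self i) hiC
    exact (mem_erase.1 h).1 heq
  have hC'_notin : C' ∉ π.parts.erase C := by
    intro h
    have heq := π.eq_of_mem_parts (mem_of_mem_erase h) hC hkC' hkC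
    exact (mem_erase.1 h).1 heq
  have hsing_ne : ({i} : Finset (Fin n)) ≠ C' := fun h => hiC' (h ▸ mem_singleton_self i)
  set P : Finset (Finset (Fin n)) := insert {i} (insert C' (π.parts.erase C)) with hP_def
  have hdisjC : ∀ D ∈ π.parts.erase C, Disjoint C D := by
    intro D hD
    exact π.disjoint hC (mem_of_mem_erase hD) (mem_erase.1 hD).1.symm
  have hPdisj : (P : Set (Finset (Fin n))).PairwiseDisjoint id := by
    intro x hx y hy hxy
    simp only [hP_def, coe_insert, Set.mem_insert_iff, mem_coe] at hx hy
    have hC'C : C' ⊆ C := erase_subset _ _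
    have hiCsub : ({i} : Finset (Fin n)) ⊆ C := singleton_subset_iff.2 hiC
    rcases hx with rfl | rfl | hx <;> rcases hy with rfl | rfl | hy
    · exact absurd rfl hxy
    · exact disjoint_singleton_left.2 hiC'
    · exact Finset.disjoint_of_subset_left hiCsub (hdisjC _ hy)
    · exact disjoint_singleton_right.2 hiC'
    · exact absurd rfl hxy
    · exact Finset.disjoint_of_subset_left hC'C (hdisjC _ hy)
    · exact Finset.disjoint_of_subset_right hiCsub (hdisjC _ hx).symm
    · exact Finset.disjoint_of_subset_right hC'C (hdisjC _ hx).symm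
    · exact π.disjoint (mem_of_mem_erase hx) (mem_of_mem_erase hy) hxy
  have hPsup : P.sup id = (univ : Finset (Fin n)) := by
    have h1 : π.parts.sup id = univ := π.sup_parts
    conv_rhs => rw [← h1, ← insert_erase hC]
    rw [hP_def, sup_insert, sup_insert, sup_insert]
    simp only [id]
    rw [← sup_assoc]
    congr 1
    rw [sup_eq_union]
    ext x
    simp only [mem_union, mem_singleton, hC'_def, mem_erase]
    constructor
    · rintro (rfl | ⟨_, h⟩)
      · exact hiC
      · exact h
    · intro hx
      by_cases hxi : x = i
      · exact Or.inl hxi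
      · exact Or.inr ⟨hxi, hx⟩
  have hPbot : (⊥ : Finset (Fin n)) ∉ P := by
    simp only [hP_def, mem_insert, bot_eq_empty]
    push_neg
    refine ⟨?_, ?_, ?_⟩
    · exact fun h => (singleton_ne_empty i) h.symm
    · exact fun h => hC'ne h.symm
    · exact fun h => π.bot_notMem (mem_of_mem_erase h)
  set σ : Finpartition (univ : Finset (Fin n)) :=
    ⟨P, supIndep_iff_pairwiseDisjoint.2 hPdisj, hPsup, hPbot⟩ with hσ_def
  set f : Finset (Fin n) → ℚ := fun D => ∑ j ∈ D, eaUtil n (d j) j D with hf_def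
  have hσ_parts : σ.parts = P := rfl
  have hsw_σ : eaSW n d σ = f {i} + (f C' + ∑ D ∈ π.parts.erase C, f D) := by
    rw [eaSW, hσ_parts, hP_def]
    rw [sum_insert (by simp only [mem_insert]; push_neg; exact ⟨hsing_ne, hsing_notin⟩),
      sum_insert hC'_notin]
  have hsw_π : eaSW n d π = f C + ∑ D ∈ π.parts.erase C, f D := by
    rw [eaSW]
    have h := Finset.sum_erase_add π.parts f hC
    simp only [hf_def] at h ⊢
    linarith
  have hfi : f {i} = 0 := by
    rw [hf_def]
    simp [eaUtil, hdi]
  have hfC : f C = -(C'.card : ℚ) + ∑ j ∈ C', eaUtil n (d j) j C := by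
    rw [hf_def]
    simp only
    rw [← Finset.sum_erase_add C _ hiC, ← hC'_def]
    have : eaUtil n (d i) i C = -(C'.card : ℚ) := by
      rw [hdi, eaUtil]
      simp [hC'_def, erase_eq]
    rw [this]
    ring
  have hfC' : ∑ j ∈ C', (eaUtil n (d j) j C - 1 / n) ≤ f C' := by
    rw [hf_def]
    refine sum_le_sum fun j hj => ?_
    exact hC'_def ▸ eaUtil_erase_ge hn0 (d j) C
  have hsum : ∑ j ∈ C', (eaUtil n (d j) j C - 1 / n)
      = (∑ j ∈ C', eaUtil n (d j) j C) - (C'.card : ℚ) / n := by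
    rw [sum_sub_distrib, sum_const, nsmul_eq_mul]
    ring
  have hm1 : (1 : ℚ) ≤ (C'.card : ℚ) := by
    have := card_pos.2 ⟨k, hkC'⟩
    exact_mod_cast this
  have hinv : (C'.card : ℚ) / n ≤ (C'.card : ℚ) / 4 := by
    apply div_le_div_of_nonneg_left (by linarith) (by norm_num)
    exact_mod_cast hn
  have hlt : eaSW n d π < eaSW n d σ := by
    rw [hsw_σ, hsw_π, hfi, hfC]
    have h := hfC'
    rw [hsum] at h
    linarith
  exact absurd (hopt σ) (not_le.2 hlt)

/-- For EA preferences with `n ≥ 4` agents, no welfare-maximizing mechanism is NOM: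
there are an agent `i`, a true type `t` and a false declaration `di` that obviously
manipulates, i.e. `min_{π ∈ Π_i(di,M)} u_i(π) > min_{π ∈ Π_i(t,M)} u_i(π)` (witnessed by
a truthful outcome strictly below every outcome reachable by declaring `di`). -/
theorem stmt16 (n : ℕ) (hn : 4 ≤ n)
    (M : (Fin n → Finset (Fin n)) → Finpartition (univ : Finset (Fin n)))
    (hM : ∀ d : Fin n → Finset (Fin n), (∀ j, j ∉ d j) →
      ∀ σ : Finpartition (univ : Finset (Fin n)), eaSW n d σ ≤ eaSW n d (M d)) :
    ∃ (i : Fin n) (t di : Finset (Fin n)), i ∉ t ∧ i ∉ di ∧ di ≠ t ∧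
      ∃ d' : Fin n → Finset (Fin n), (∀ j, j ∉ d' j) ∧ d' i = t ∧
        ∀ d : Fin n → Finset (Fin n), (∀ j, j ∉ d j) → d i = di →
          eaAgentUtil n t i (M d') < eaAgentUtil n t i (M d) := by
  classical
  have h0 : (0:ℕ) < n := by omega
  have h1 : (1:ℕ) < n := by omega
  have h2n : (2:ℕ) < n := by omega
  have hnq : (0:ℚ) < n := by exact_mod_cast h0
  set i : Fin n := ⟨0, h0⟩ with hi_def
  set e : Fin n := ⟨1, h1⟩ with he_def
  set w : Fin n := ⟨2, h2n⟩ with hw_def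
  have hie : i ≠ e := by simp [hi_def, he_def, Fin.ext_iff]
  set t : Finset (Fin n) := univ \ {i, e} with ht_def
  have hit : i ∉ t := by simp [ht_def]
  have het : e ∉ t := by simp [ht_def]
  have hwt : w ∈ t := by
    simp only [ht_def, mem_sdiff, mem_univ, true_and, mem_insert, mem_singleton]
    push_neg
    constructor <;> simp [hw_def, hi_def, he_def, Fin.ext_iff]
  have htcard : t.card = n - 2 := by
    rw [ht_def, card_sdiff_of_subset (subset_univ _), card_univ, Fintype.card_fin,
      card_insert_of_notMem (by simp [hie]), card_singleton]
  have hsd : univ \ (t ∪ {i}) = {e} := by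
    ext x
    simp only [ht_def, mem_sdiff, mem_union, mem_singleton, mem_univ, true_and, mem_insert]
    constructor
    · intro hx; push_neg at hx; tauto
    · rintro rfl
      push_neg
      exact ⟨Or.inr rfl, fun h => hie h.symm⟩
  set d' : Fin n → Finset (Fin n) := fun j => if j = i then t else univ \ {j} with hd'_def
  have hd' : ∀ j, j ∉ d' j := by
    intro j
    rw [hd'_def]
    by_cases hj : j = i
    · subst hj; simp [hit]
    · simp [hj]
  have hd'i : d' i = t := by rw [hd'_def]; simp
  -- the grand coalition partition
  have hune : (univ : Finset (Fin n)) ≠ ⊥ := by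
    simp only [bot_eq_empty, ← nonempty_iff_ne_empty]
    exact ⟨i, mem_univ i⟩
  set grand : Finpartition (univ : Finset (Fin n)) := Finpartition.indiscrete hune with hg_def
  have hgparts : grand.parts = {univ} := rfl
  have hcast1 : ((n - 1 : ℕ) : ℚ) = (n : ℚ) - 1 := by
    have h : (1:ℕ) ≤ n := by omega
    push_cast [Nat.cast_sub h]
    ring
  have hcast2 : ((n - 2 : ℕ) : ℚ) = (n : ℚ) - 2 := by
    have h : (2:ℕ) ≤ n := by omega
    push_cast [Nat.cast_sub h]
    ring
  have hui : eaUtil n (d' i) i univ = ((n:ℚ) - 2)/n - 1 := by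
    rw [hd'i, eaUtil, univ_inter, htcard, hsd, card_singleton, hcast2]
    norm_num
  have huj : ∀ j : Fin n, j ≠ i → eaUtil n (d' j) j univ = ((n:ℚ) - 1)/n := by
    intro j hj
    have hdj : d' j = univ \ {j} := by rw [hd'_def]; simp [hj]
    rw [hdj, eaUtil, univ_inter]
    have h2 : (univ \ {j}) ∪ {j} = (univ : Finset (Fin n)) := by
      ext x
      simp only [mem_union, mem_sdiff, mem_singleton, mem_univ, true_and, iff_true]
      tauto
    rw [h2, sdiff_self, card_sdiff_of_subset (subset_univ _), card_univ, Fintype.card_fin,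
      card_singleton, hcast1]
    simp
  have hgrand : eaSW n d' grand = ((n:ℚ)^2 - 2*n - 1)/n := by
    rw [eaSW, hgparts, sum_singleton]
    have hsplit := Finset.sum_erase_add univ (fun j => eaUtil n (d' j) j univ) (mem_univ i)
    rw [← hsplit, hui]
    have hconst : ∑ j ∈ univ.erase i, eaUtil n (d' j) j univ
        = ∑ _j ∈ univ.erase i, ((n:ℚ) - 1)/n :=
      sum_congr rfl fun j hj => huj j (mem_erase.1 hj).1
    rw [hconst, sum_const, nsmul_eq_mul, card_erase_of_mem (mem_univ i), card_univ,
      Fintype.card_fin, hcast1]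
    field_simp
    ring
  refine ⟨i, t, ∅, hit, notMem_empty i, ?_, d', hd', hd'i, ?_⟩
  · intro h
    rw [← h] at hwt
    exact notMem_empty _ hwt
  · intro d hd hdi
    -- truthful side: i's part in M d' contains e, hence the utility is negative
    obtain ⟨A, hA, hiA⟩ := (M d').exists_mem (mem_univ i)
    have heA : e ∈ A := by
      by_contra heA
      obtain ⟨B, hB, heB⟩ := (M d').exists_mem (mem_univ e)
      have hAB : A ≠ B := fun h => heA (h ▸ heB)
      have hsep := sw_separated hn d' hd' (M d') hA hB hAB
      have hge := hM d' hd' grand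
      rw [hgrand] at hge
      have hlt : ((n:ℚ)^2 - 3*n + 2)/n < ((n:ℚ)^2 - 2*n - 1)/n := by
        have hq4 : (4:ℚ) ≤ n := by exact_mod_cast hn
        rw [div_lt_div_iff_of_pos_right hnq]
        linarith
      linarith
    have hLHS : eaAgentUtil n t i (M d') < 0 := by
      rw [eaAgentUtil_eq t i (M d') A hA hiA, eaUtil]
      have hc1 : (A ∩ t).card ≤ n - 2 :=
        le_trans (card_le_card inter_subset_right) (le_of_eq htcard)
      have hc1q : ((A ∩ t).card : ℚ) ≤ (n:ℚ) - 2 := by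
        rw [← hcast2]; exact_mod_cast hc1
      have he2 : e ∈ A \ (t ∪ {i}) := by
        refine mem_sdiff.2 ⟨heA, ?_⟩
        simp only [mem_union, mem_singleton]
        push_neg
        exact ⟨het, fun h => hie h.symm⟩
      have hc2 : (1:ℚ) ≤ ((A \ (t ∪ {i})).card : ℚ) := by
        have := card_pos.2 ⟨e, he2⟩
        exact_mod_cast this
      have hd1 : ((A ∩ t).card : ℚ)/n ≤ ((n:ℚ) - 2)/n := by gcongr
      have hd2 : ((n:ℚ) - 2)/n < 1 := by
        rw [div_lt_one hnq]
        linarith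
      linarith
    -- lying side: i is alone in M d, so her true utility is 0
    obtain ⟨C, hC, hiC⟩ := (M d).exists_mem (mem_univ i)
    have hCs : C = {i} := part_singleton hn d hd i hdi (M d) (hM d hd) C hC hiC
    have hRHS : eaAgentUtil n t i (M d) = 0 := by
      rw [eaAgentUtil_eq t i (M d) C hC hiC, hCs, eaUtil]
      have e1 : ({i} : Finset (Fin n)) ∩ t = ∅ := by
        rw [singleton_inter_of_notMem hit]
      have e2 : ({i} : Finset (Fin n)) \ (t ∪ {i}) = ∅ := by
        ext x
        simp only [mem_sdiff, mem_singleton, mem_union, notMem_empty, iff_false]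
        rintro ⟨rfl, h⟩
        exact h (Or.inr rfl)
      rw [e1, e2]
      simp
    rw [hRHS]
    exact hLHS
end
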